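/- Let A be a Pickands function arising from a 2-monotone W with inner pdf f via the Williamson transform (W(x) = ∫_x^1 (1 - x/r) f(r) dr) followed by the affine change t(x) = (1+x-W(x))/2, A(t(x)) = (1+x+W(x))/2. Then the Gini coefficient G = 4(1 - ∫_0^1 A(t) dt) satisfies G = 1 - 2∫_0^1 W(x) dx = 1 - E[X], where X is a random variable with density f. -/

import Mathlib

open MeasureTheory intervalIntegral Set Filter

/-- the Gini coefficient G = 4(1 - ∫A) equals 1 - 2∫W and 1 - E[X],
where X has density f, W is the Williamson transform of f, and A the resulting
Pickands function. -/
theorem stmt18 (f W A : ℝ → ℝ)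
    (hcont : ContinuousOn f (Set.Icc (0:ℝ) 1))
    (hnonneg : ∀ x ∈ Set.Icc (0:ℝ) 1, 0 ≤ f x)
    (hpdf : (∫ x in (0:ℝ)..1, f x) = 1)
    (hW : ∀ x ∈ Set.Icc (0:ℝ) 1, W x = ∫ r in x..1, (1 - x / r) * f r)
    (hrel : ∀ x ∈ Set.Icc (0:ℝ) 1, A ((1 + x - W x) / 2) = (1 + x + W x) / 2)
    (hbij : Set.BijOn (fun x => (1 + x - W x) / 2) (Set.Icc (0:ℝ) 1) (Set.Icc (0:ℝ) 1)) :
    4 * (1 - ∫ t in (0:ℝ)..1, A t) = 1 - 2 * (∫ x in (0:ℝ)..1, W x) ∧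
    4 * (1 - ∫ t in (0:ℝ)..1, A t) = 1 - ∫ x in (0:ℝ)..1, x * f x := by
  -- clamp
  set c : ℝ → ℝ := fun x => max 0 (min 1 x) with hc
  have hc_mem : ∀ x, c x ∈ Icc (0:ℝ) 1 := fun x =>
    ⟨le_max_left _ _, max_le (by norm_num) (min_le_left _ _)⟩
  have hc_eq : ∀ x ∈ Icc (0:ℝ) 1, c x = x := fun x hx => by
    simp [hc, min_eq_right hx.2, max_eq_right hx.1]
  set ft : ℝ → ℝ := fun x => f (c x) with hft
  have hft_cont : Continuous ft :=
    hcont.comp_continuous (continuous_const.max (continuous_const.min continuous_id)) hc_mem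
  have hft_eq : ∀ x ∈ Icc (0:ℝ) 1, ft x = f x := fun x hx => by rw [hft]; simp [hc_eq x hx]
  have hft_nonneg : ∀ x, 0 ≤ ft x := fun x => hnonneg _ (hc_mem x)
  obtain ⟨M, hM⟩ : ∃ M, ∀ x, ft x ≤ M := by
    obtain ⟨M, hM⟩ := (isCompact_Icc (a := (0:ℝ)) (b := 1)).exists_bound_of_continuousOn hcont
    exact ⟨M, fun x => le_trans (le_abs_self _) (by simpa using hM _ (hc_mem x))⟩
  have hM0 : 0 ≤ M := le_trans (hft_nonneg 0) (hM 0)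
  set F : ℝ → ℝ := fun x => ∫ r in x..1, ft r with hF
  set G : ℝ → ℝ := fun x => ∫ r in x..1, ft r / r with hG
  -- derivatives of F and G
  have hF_deriv : ∀ x : ℝ, HasDerivAt F (-ft x) x := by
    intro x
    have h1 : HasDerivAt (fun u => ∫ r in (1:ℝ)..u, ft r) (ft x) x :=
      intervalIntegral.integral_hasDerivAt_right (hft_cont.intervalIntegrable _ _)
        (hft_cont.stronglyMeasurableAtFilter _ _) hft_cont.continuousAt
    have : F = fun u => -∫ r in (1:ℝ)..u, ft r := by
      funext u; exact intervalIntegral.integral_symm 1 u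
    rw [this]; exact h1.neg
  have hF_cont : Continuous F := by
    exact continuous_iff_continuousAt.mpr fun x => (hF_deriv x).continuousAt
  have hG_deriv : ∀ x : ℝ, 0 < x → HasDerivAt G (-(ft x / x)) x := by
    intro x hx
    have hint : IntervalIntegrable (fun r => ft r / r) volume 1 x := by
      apply ContinuousOn.intervalIntegrable
      intro r hr
      have hr0 : r ≠ 0 := ne_of_gt (lt_of_lt_of_le (lt_min one_pos hx) hr.1)
      exact (hft_cont.continuousAt.continuousWithinAt).div continuousWithinAt_id hr0
    have h1 : HasDerivAt (fun u => ∫ r in (1:ℝ)..u, ft r / r) (ft x / x) x := by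
      refine intervalIntegral.integral_hasDerivAt_right hint
        ⟨univ, univ_mem, ((hft_cont.measurable.div measurable_id).aestronglyMeasurable).restrict⟩
        (hft_cont.continuousAt.div continuousAt_id hx.ne')
    have : G = fun u => -∫ r in (1:ℝ)..u, ft r / r := by
      funext u; exact intervalIntegral.integral_symm 1 u
    rw [this]; exact h1.neg
  have hG_contAt : ∀ x : ℝ, 0 < x → ContinuousAt G x :=
    fun x hx => (hG_deriv x hx).continuousAt
  have hdiv_contOn : ∀ x : ℝ, 0 < x → ContinuousOn (fun r => ft r / r) (Icc x 1) := by
    intro x hx r hr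
    exact (hft_cont.continuousAt.continuousWithinAt).div continuousWithinAt_id
      (ne_of_gt (lt_of_lt_of_le hx hr.1))
  have hG_nonneg : ∀ x ∈ Ioc (0:ℝ) 1, 0 ≤ G x := by
    intro x hx
    apply intervalIntegral.integral_nonneg hx.2
    intro r hr
    exact div_nonneg (hft_nonneg r) (le_trans hx.1.le hr.1)
  have hG_bound : ∀ x ∈ Ioc (0:ℝ) 1, G x ≤ 2 * M * x ^ (-(1:ℝ)/2) := by
    intro x hx
    have h1 : G x ≤ ∫ r in x..1, M / r := by
      apply intervalIntegral.integral_mono_on hx.2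
      · exact ((hdiv_contOn x hx.1).mono (by rw [uIcc_of_le hx.2])).intervalIntegrable
      · apply ContinuousOn.intervalIntegrable
        intro r hr
        rw [uIcc_of_le hx.2] at hr
        exact continuousWithinAt_const.div continuousWithinAt_id
          (ne_of_gt (lt_of_lt_of_le hx.1 hr.1))
      · intro r hr
        have hr0 : (0:ℝ) < r := lt_of_lt_of_le hx.1 hr.1
        exact div_le_div_of_nonneg_right (hM r) hr0.le
    have h2 : (∫ r in x..1, M / r) = M * Real.log x⁻¹ := by
      have : (∫ r in x..1, M / r) = M * ∫ r in x..1, 1 / r := by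
        rw [← intervalIntegral.integral_const_mul]
        congr 1; funext r; ring
      rw [this, integral_one_div (by
        intro h
        rw [uIcc_of_le hx.2] at h
        exact absurd h.1 (not_le.mpr hx.1)), one_div, Real.log_inv]
    have h3 : Real.log x⁻¹ ≤ 2 * x ^ (-(1:ℝ)/2) := by
      have hx0 := hx.1
      have hlog : Real.log x⁻¹ = 2 * Real.log (x ^ (-(1:ℝ)/2)) := by
        rw [Real.log_rpow hx0, Real.log_inv]; ring
      rw [hlog]
      have := Real.log_le_sub_one_of_pos (Real.rpow_pos_of_pos hx0 (-(1:ℝ)/2))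
      nlinarith [Real.rpow_pos_of_pos hx0 (-(1:ℝ)/2)]
    calc G x ≤ ∫ r in x..1, M / r := h1
      _ = M * Real.log x⁻¹ := h2
      _ ≤ M * (2 * x ^ (-(1:ℝ)/2)) := by
          apply mul_le_mul_of_nonneg_left h3 hM0
      _ = 2 * M * x ^ (-(1:ℝ)/2) := by ring
  have hG_int : IntervalIntegrable G volume 0 1 := by
    rw [intervalIntegrable_iff_integrableOn_Ioc_of_le zero_le_one]
    have hbd : Integrable (fun x : ℝ => 2 * M * x ^ (-(1:ℝ)/2)) (volume.restrict (Ioc 0 1)) := by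
      have := (intervalIntegrable_rpow' (a := 0) (b := 1) (r := -(1:ℝ)/2) (by norm_num)).const_mul (2*M)
      rwa [intervalIntegrable_iff_integrableOn_Ioc_of_le zero_le_one] at this
    apply Integrable.mono' hbd
    · exact ((continuousOn_of_forall_continuousAt (fun x hx => hG_contAt x hx.1)).aestronglyMeasurable
        measurableSet_Ioc)
    · rw [ae_restrict_iff' measurableSet_Ioc]
      filter_upwards with x hx
      rw [Real.norm_eq_abs, abs_of_nonneg (hG_nonneg x hx)]
      exact hG_bound x hx
  -- W basic values
  have h01 : (0:ℝ) ∈ Icc (0:ℝ) 1 := ⟨le_rfl, zero_le_one⟩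
  have h11 : (1:ℝ) ∈ Icc (0:ℝ) 1 := ⟨zero_le_one, le_rfl⟩
  have hW1 : W 1 = 0 := by rw [hW 1 h11, intervalIntegral.integral_same]
  have hF0 : F 0 = 1 := by
    have : F 0 = ∫ r in (0:ℝ)..1, f r :=
      intervalIntegral.integral_congr fun r hr => by
        rw [uIcc_of_le zero_le_one] at hr; exact hft_eq r hr
    rw [this, hpdf]
  have hF1 : F 1 = 0 := intervalIntegral.integral_same
  have hG1 : G 1 = 0 := intervalIntegral.integral_same
  have hW0 : W 0 = 1 := by
    have e : (∫ r in (0:ℝ)..1, (1 - 0 / r) * f r) = ∫ r in (0:ℝ)..1, f r := by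
      apply intervalIntegral.integral_congr
      intro r hr
      show (1 - 0 / r) * f r = f r
      rw [zero_div, sub_zero, one_mul]
    rw [hW 0 h01, e, hpdf]
  -- W = F - x G on Icc
  have hWF : ∀ x ∈ Icc (0:ℝ) 1, W x = F x - x * G x := by
    intro x hx
    rcases eq_or_lt_of_le hx.1 with h0 | h0
    · rw [← h0]; simpa [hF0] using hW0
    · rw [hW x hx]
      have hsub : Icc x 1 ⊆ Icc (0:ℝ) 1 := Icc_subset_Icc hx.1 le_rfl
      have e1 : (∫ r in x..1, (1 - x / r) * f r) = ∫ r in x..1, (ft r - x * (ft r / r)) := by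
        apply intervalIntegral.integral_congr
        intro r hr
        rw [uIcc_of_le hx.2] at hr
        have hr0 : (0:ℝ) < r := lt_of_lt_of_le h0 hr.1
        show (1 - x / r) * f r = ft r - x * (ft r / r)
        rw [hft_eq r (hsub hr)]
        field_simp
      rw [e1, intervalIntegral.integral_sub (hft_cont.intervalIntegrable _ _)
        (((hdiv_contOn x h0).mono (by rw [uIcc_of_le hx.2])).intervalIntegrable.const_mul x),
        intervalIntegral.integral_const_mul]
  -- continuity of x * G x on Icc, and of W
  have hxG_cont : ContinuousOn (fun x => x * G x) (Icc (0:ℝ) 1) := by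
    intro x hx
    rcases eq_or_lt_of_le hx.1 with h0 | h0
    · -- x = 0 : squeeze
      rw [← h0]
      have key : Tendsto (fun y => y * G y) (nhdsWithin 0 (Icc (0:ℝ) 1)) (nhds 0) := by
        apply squeeze_zero_norm' (a := fun y => 2 * M * y ^ ((1:ℝ)/2))
        · filter_upwards [self_mem_nhdsWithin] with y hy
          rcases eq_or_lt_of_le hy.1 with hy0 | hy0
          · rw [← hy0]; simp [Real.zero_rpow (by norm_num : ((1:ℝ)/2) ≠ 0)]
          · have hyIoc : y ∈ Ioc (0:ℝ) 1 := ⟨hy0, hy.2⟩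
            rw [Real.norm_eq_abs, abs_of_nonneg (mul_nonneg hy.1 (hG_nonneg y hyIoc))]
            calc y * G y ≤ y * (2 * M * y ^ (-(1:ℝ)/2)) := by
                  exact mul_le_mul_of_nonneg_left (hG_bound y hyIoc) hy.1
              _ = 2 * M * (y ^ (1:ℝ) * y ^ (-(1:ℝ)/2)) := by rw [Real.rpow_one]; ring
              _ = 2 * M * y ^ ((1:ℝ)/2) := by
                  rw [← Real.rpow_add hy0]; norm_num
        · have : Tendsto (fun y : ℝ => 2 * M * y ^ ((1:ℝ)/2)) (nhds 0) (nhds (2 * M * (0:ℝ) ^ ((1:ℝ)/2))) := by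
            exact (Real.continuousAt_rpow_const 0 _ (Or.inr (by norm_num))).const_mul _
          rw [Real.zero_rpow (by norm_num : ((1:ℝ)/2) ≠ 0), mul_zero] at this
          exact this.mono_left nhdsWithin_le_nhds
      unfold ContinuousWithinAt
      convert key using 2
      simp
    · exact (continuousAt_id.mul (hG_contAt x h0)).continuousWithinAt
  have hW_cont : ContinuousOn W (Icc (0:ℝ) 1) :=
    ((hF_cont.continuousOn).sub hxG_cont).congr hWF
  -- derivative of W on Ioo
  have hW_deriv : ∀ x ∈ Ioo (0:ℝ) 1, HasDerivAt W (-G x) x := by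
    intro x hx
    have hx0 := hx.1
    have hd : HasDerivAt (fun y => F y - y * G y) (-G x) x := by
      have h1 : HasDerivAt (fun y => y * G y) (1 * G x + x * -(ft x / x)) x :=
        (hasDerivAt_id x).mul (hG_deriv x hx0)
      have h2 := (hF_deriv x).sub h1
      refine h2.congr_deriv ?_
      have hxne : x ≠ 0 := hx0.ne'
      field_simp
      ring
    apply hd.congr_of_eventuallyEq
    filter_upwards [Icc_mem_nhds hx.1 hx.2] with y hy
    exact hWF y hy
  set φ : ℝ → ℝ := fun x => (1 + x - W x) / 2 with hφdef
  set ψ : ℝ → ℝ := fun x => (1 + x + W x) / 2 with hψdef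
  have hφ0 : φ 0 = 0 := by show (1 + 0 - W 0) / 2 = 0; rw [hW0]; norm_num
  have hφ1 : φ 1 = 1 := by show (1 + 1 - W 1) / 2 = 1; rw [hW1]; norm_num
  have hφ_cont : ContinuousOn φ (Icc (0:ℝ) 1) :=
    (((continuous_const.add continuous_id).continuousOn.sub hW_cont)).div_const 2
  have hψ_cont : ContinuousOn ψ (Icc (0:ℝ) 1) :=
    (((continuous_const.add continuous_id).continuousOn.add hW_cont)).div_const 2
  have hφ_deriv : ∀ x ∈ Ioo (0:ℝ) 1, HasDerivAt φ ((1 + G x)/2) x := by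
    intro x hx
    have h2 := (((hasDerivAt_const x (1:ℝ)).add (hasDerivAt_id x)).sub (hW_deriv x hx)).div_const 2
    refine h2.congr_deriv ?_; ring
  have himage : φ '' (Icc (0:ℝ) 1) = Icc (0:ℝ) 1 := hbij.image_eq
  have hA_cont : ContinuousOn A (Icc (0:ℝ) 1) := by
    let e : (Icc (0:ℝ) 1) ≃ (Icc (0:ℝ) 1) := Set.BijOn.equiv φ hbij
    have he_cont : Continuous (e : Icc (0:ℝ) 1 → Icc (0:ℝ) 1) := by
      apply Continuous.subtype_mk
      exact continuousOn_iff_continuous_restrict.mp hφ_cont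
    let H := Continuous.homeoOfEquivCompactToT2 (f := e) he_cont
    rw [continuousOn_iff_continuous_restrict]
    have hres : restrict (Icc (0:ℝ) 1) A = fun t => ψ ((H.symm t : Icc (0:ℝ) 1) : ℝ) := by
      funext t
      have h1 : φ ((H.symm t : Icc (0:ℝ) 1) : ℝ) = (t : ℝ) :=
        congrArg Subtype.val (H.apply_symm_apply t)
      have h2 := hrel _ (H.symm t).2
      show A t = _
      rw [← h1] at *
      exact h2
    show Continuous (restrict (Icc (0:ℝ) 1) A)
    rw [hres]
    exact hψ_cont.comp_continuous (continuous_subtype_val.comp H.symm.continuous)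
      (fun t => (H.symm t).2)
  have huIcc : uIcc (0:ℝ) 1 = Icc (0:ℝ) 1 := uIcc_of_le zero_le_one
  obtain ⟨C, hC⟩ : ∃ C, ∀ x ∈ Icc (0:ℝ) 1, |ψ x| ≤ C := by
    obtain ⟨C, hC⟩ := (isCompact_Icc (a := (0:ℝ)) (b := 1)).exists_bound_of_continuousOn hψ_cont
    exact ⟨C, fun x hx => by simpa using hC x hx⟩
  obtain ⟨CW, hCW⟩ : ∃ CW, ∀ x ∈ Icc (0:ℝ) 1, |W x| ≤ CW := by
    obtain ⟨C', hC'⟩ := (isCompact_Icc (a := (0:ℝ)) (b := 1)).exists_bound_of_continuousOn hW_cont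
    exact ⟨C', fun x hx => by simpa using hC' x hx⟩
  set φd : ℝ → ℝ := fun x => (1 + G x) / 2 with hφd
  have hG_Ioc : IntegrableOn G (Ioc (0:ℝ) 1) := by
    rwa [intervalIntegrable_iff_integrableOn_Ioc_of_le zero_le_one] at hG_int
  have hG_Icc : IntegrableOn G (Icc (0:ℝ) 1) := by
    rwa [integrableOn_Icc_iff_integrableOn_Ioc]
  have hφd_int : IntegrableOn φd (Icc (0:ℝ) 1) := by
    apply Integrable.div_const
    apply Integrable.add _ hG_Icc
    exact (integrableOn_const measure_Icc_lt_top.ne)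
  have hψφd_int : IntegrableOn (fun x => ψ x * φd x) (Icc (0:ℝ) 1) := by
    apply Integrable.bdd_mul (c := C) hφd_int
      (hψ_cont.aestronglyMeasurable measurableSet_Icc)
    rw [ae_restrict_iff' measurableSet_Icc]
    filter_upwards with x hx
    rw [Real.norm_eq_abs]; exact hC x hx
  -- substitution
  have hmin : min (0:ℝ) 1 = 0 := by norm_num
  have hmax : max (0:ℝ) 1 = 1 := by norm_num
  have hsubst : (∫ t in (0:ℝ)..1, A t) = ∫ x in (0:ℝ)..1, ψ x * φd x := by
    have key := intervalIntegral.integral_comp_smul_deriv''' (a := (0:ℝ)) (b := 1) (f := φ)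
      (f' := φd) (g := A)
      (by rw [huIcc]; exact hφ_cont)
      (by rw [hmin, hmax]
          exact fun x hx => ((hφ_deriv x hx).hasDerivWithinAt))
      (by rw [hmin, hmax]
          exact hA_cont.mono (by rw [← himage]; exact image_mono Ioo_subset_Icc_self))
      (by rw [huIcc, himage]
          exact hA_cont.integrableOn_compact isCompact_Icc)
      (by rw [huIcc]
          apply hψφd_int.congr_fun _ measurableSet_Icc
          intro x hx
          show ψ x * φd x = φd x • (A ∘ φ) x
          show ψ x * φd x = φd x * A (φ x)
          rw [hrel x hx, mul_comm])
    rw [hφ0, hφ1] at key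
    rw [← key]
    apply intervalIntegral.integral_congr
    intro x hx
    rw [huIcc] at hx
    show φd x • (A ∘ φ) x = ψ x * φd x
    show φd x * A (φ x) = ψ x * φd x
    rw [hrel x hx, mul_comm]
  -- interval integrabilities
  have hW_int : IntervalIntegrable W volume 0 1 := (huIcc ▸ hW_cont).intervalIntegrable
  have hIoc_int : ∀ {u : ℝ → ℝ}, IntegrableOn u (Ioc (0:ℝ) 1) → IntervalIntegrable u volume 0 1 :=
    fun h => (intervalIntegrable_iff_integrableOn_Ioc_of_le zero_le_one).mpr h
  have hxG_int : IntervalIntegrable (fun x => (1 + x) * G x) volume 0 1 := by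
    apply hIoc_int
    apply Integrable.bdd_mul (c := 2) hG_Ioc
      (((continuous_const.add continuous_id).continuousOn (s := Ioc (0:ℝ) 1)).aestronglyMeasurable
        measurableSet_Ioc)
    rw [ae_restrict_iff' measurableSet_Ioc]
    filter_upwards with x hx
    simp only [Pi.add_apply, id_eq]
    rw [Real.norm_eq_abs, abs_of_nonneg (by linarith [hx.1.le] : (0:ℝ) ≤ 1 + x)]
    linarith [hx.2]
  have hWG_int : IntervalIntegrable (fun x => W x * G x) volume 0 1 := by
    apply hIoc_int
    apply Integrable.bdd_mul (c := CW) hG_Ioc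
      ((hW_cont.mono Ioc_subset_Icc_self).aestronglyMeasurable measurableSet_Ioc)
    rw [ae_restrict_iff' measurableSet_Ioc]
    filter_upwards with x hx
    rw [Real.norm_eq_abs]; exact hCW x (Ioc_subset_Icc_self hx)
  -- FTC 1 : ∫ (W - (1+x) G) = -1
  have e1 : (∫ x in (0:ℝ)..1, (W x - (1 + x) * G x)) = -1 := by
    have hu_cont : ContinuousOn (fun x => (1 + x) * W x) (Icc (0:ℝ) 1) :=
      ((continuous_const.add continuous_id).continuousOn).mul hW_cont
    have hu_deriv : ∀ x ∈ Ioo (0:ℝ) 1,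
        HasDerivWithinAt (fun x => (1 + x) * W x) (W x - (1 + x) * G x) (Ioi x) x := by
      intro x hx
      have h := ((hasDerivAt_const x (1:ℝ)).add (hasDerivAt_id x)).mul (hW_deriv x hx)
      simp only [Pi.mul_apply, Pi.add_apply, id_eq] at h
      have heq : (0 + 1) * W x + (1 + x) * -G x = W x - (1 + x) * G x := by ring
      rw [heq] at h
      exact h.hasDerivWithinAt
    rw [intervalIntegral.integral_eq_sub_of_hasDeriv_right_of_le zero_le_one hu_cont hu_deriv
      (hW_int.sub hxG_int)]
    show (1 + 1) * W 1 - (1 + 0) * W 0 = -1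
    rw [hW1, hW0]; norm_num
  have e1' : (∫ x in (0:ℝ)..1, (1 + x) * G x) = (∫ x in (0:ℝ)..1, W x) + 1 := by
    rw [intervalIntegral.integral_sub hW_int hxG_int] at e1
    linarith
  -- FTC 2 : ∫ (- W G) = -(1/2)
  have e2 : (∫ x in (0:ℝ)..1, W x * G x) = 1/2 := by
    have hv_cont : ContinuousOn (fun x => W x * W x / 2) (Icc (0:ℝ) 1) :=
      (hW_cont.mul hW_cont).div_const 2
    have hv_deriv : ∀ x ∈ Ioo (0:ℝ) 1,
        HasDerivWithinAt (fun x => W x * W x / 2) (-(W x * G x)) (Ioi x) x := by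
      intro x hx
      have h := ((hW_deriv x hx).mul (hW_deriv x hx)).div_const 2
      have heq : (-G x * W x + W x * -G x) / 2 = -(W x * G x) := by ring
      rw [heq] at h
      exact h.hasDerivWithinAt
    have := intervalIntegral.integral_eq_sub_of_hasDeriv_right_of_le zero_le_one hv_cont hv_deriv
      hWG_int.neg
    rw [intervalIntegral.integral_neg] at this
    have hval : W 1 * W 1 / 2 - W 0 * W 0 / 2 = -(1/2) := by rw [hW1, hW0]; norm_num
    rw [hval] at this
    linarith
  -- linear part
  have hlin : (∫ x in (0:ℝ)..1, (1 + x)) = 3/2 := by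
    rw [intervalIntegral.integral_add intervalIntegrable_const intervalIntegral.intervalIntegrable_id,
      intervalIntegral.integral_const, integral_id]
    norm_num
  have hP1 : (∫ x in (0:ℝ)..1, (1 + x + W x)) = 3/2 + ∫ x in (0:ℝ)..1, W x := by
    rw [intervalIntegral.integral_add
      (intervalIntegrable_const.add intervalIntegral.intervalIntegrable_id) hW_int, hlin]
  -- assemble J
  have hJ : (∫ x in (0:ℝ)..1, ψ x * φd x)
      = (3 + 2 * ∫ x in (0:ℝ)..1, W x) / 4 := by
    have hfe : (fun x => ψ x * φd x)
        = fun x => ((1 + x + W x) + ((1 + x) * G x + W x * G x)) / 4 := by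
      funext x
      show ((1 + x + W x) / 2) * ((1 + G x) / 2) = _
      ring
    rw [hfe]
    rw [intervalIntegral.integral_div]
    rw [intervalIntegral.integral_add
      ((intervalIntegrable_const.add intervalIntegral.intervalIntegrable_id).add hW_int)
      (hxG_int.add hWG_int)]
    rw [intervalIntegral.integral_add hxG_int hWG_int, hP1, e1', e2]
    ring
  have hA_val : (∫ t in (0:ℝ)..1, A t) = (3 + 2 * ∫ x in (0:ℝ)..1, W x) / 4 := by
    rw [hsubst, hJ]
  -- Part 2 : ∫ W = (1/2) ∫ x f
  have q1 : (∫ x in (0:ℝ)..1, (F x - x * ft x)) = 0 := by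
    have hu : ∀ x ∈ uIcc (0:ℝ) 1, HasDerivAt (fun y => y * F y) (F x - x * ft x) x := by
      intro x _
      have h := (hasDerivAt_id x).mul (hF_deriv x)
      simp only [id_eq] at h
      have heq : 1 * F x + x * -ft x = F x - x * ft x := by ring
      rwa [heq] at h
    rw [intervalIntegral.integral_eq_sub_of_hasDerivAt hu
      ((hF_cont.continuousOn.sub ((continuous_id.mul hft_cont).continuousOn)).mono
        (by rw [huIcc])).intervalIntegrable]
    show 1 * F 1 - 0 * F 0 = 0
    rw [hF1]; ring
  have hxft_int : IntervalIntegrable (fun x => x * ft x) volume 0 1 :=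
    (continuous_id.mul hft_cont).intervalIntegrable _ _
  have hF_int : IntervalIntegrable F volume 0 1 := hF_cont.intervalIntegrable _ _
  have q1' : (∫ x in (0:ℝ)..1, F x) = ∫ x in (0:ℝ)..1, x * ft x := by
    rw [intervalIntegral.integral_sub hF_int hxft_int] at q1
    linarith
  have hxGonly_int : IntervalIntegrable (fun x => x * G x) volume 0 1 := by
    apply hIoc_int
    apply Integrable.bdd_mul (c := 1) hG_Ioc
      ((continuous_id.continuousOn (s := Ioc (0:ℝ) 1)).aestronglyMeasurable measurableSet_Ioc)
    rw [ae_restrict_iff' measurableSet_Ioc]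
    filter_upwards with x hx
    simp only [id_eq]
    rw [Real.norm_eq_abs, abs_of_nonneg hx.1.le]
    exact hx.2
  have q2 : (∫ x in (0:ℝ)..1, (x * G x - x * ft x / 2)) = 0 := by
    have hu_cont : ContinuousOn (fun x => x * G x * x / 2) (Icc (0:ℝ) 1) :=
      ((hxG_cont.mul (continuous_id.continuousOn)).div_const 2)
    have hu_deriv : ∀ x ∈ Ioo (0:ℝ) 1,
        HasDerivWithinAt (fun x => x * G x * x / 2) (x * G x - x * ft x / 2) (Ioi x) x := by
      intro x hx
      have h := (((hasDerivAt_id x).mul (hG_deriv x hx.1)).mul (hasDerivAt_id x)).div_const 2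
      have heq : ((1 * G x + x * -(ft x / x)) * x + x * G x * 1) / 2
          = x * G x - x * ft x / 2 := by
        have hxne : x ≠ 0 := hx.1.ne'
        field_simp
        ring
      simp only [Pi.mul_apply, id_eq] at h
      rw [heq] at h
      exact h.hasDerivWithinAt
    rw [intervalIntegral.integral_eq_sub_of_hasDeriv_right_of_le zero_le_one hu_cont hu_deriv
      (hxGonly_int.sub (hxft_int.div_const 2))]
    show 1 * G 1 * 1 / 2 - 0 * G 0 * 0 / 2 = 0
    rw [hG1]; ring
  have q2' : (∫ x in (0:ℝ)..1, x * G x) = (∫ x in (0:ℝ)..1, x * ft x) / 2 := by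
    rw [intervalIntegral.integral_sub hxGonly_int (hxft_int.div_const 2),
      intervalIntegral.integral_div] at q2
    linarith
  have hIW : (∫ x in (0:ℝ)..1, W x) = (∫ x in (0:ℝ)..1, x * ft x) / 2 := by
    have : (∫ x in (0:ℝ)..1, W x) = ∫ x in (0:ℝ)..1, (F x - x * G x) := by
      apply intervalIntegral.integral_congr
      intro x hx
      rw [huIcc] at hx
      exact hWF x hx
    rw [this, intervalIntegral.integral_sub hF_int hxGonly_int, q1', q2']
    ring
  have hxf : (∫ x in (0:ℝ)..1, x * f x) = ∫ x in (0:ℝ)..1, x * ft x := by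
    apply intervalIntegral.integral_congr
    intro x hx
    rw [huIcc] at hx
    show x * f x = x * ft x
    rw [hft_eq x hx]
  constructor
  · rw [hA_val]; ring
  · rw [hA_val, hxf, hIW]; ring
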